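/- Let 0 < t < s < d, let E_n be open sets in 𝕋^d, and let μ_n be finite Borel measures with μ_n(𝕋^d \ E_n) = 0, each absolutely continuous with respect to λ, and let C be a constant such that for every ball B, C^{−1} ≤ liminf_{n→∞} μ_n(B)/λ(B) ≤ limsup_{n→∞} μ_n(B)/λ(B) ≤ C, and ∬ |x−y|^{−s} dμ_n(x) dμ_n(y) < C for all n. Then there is a constant C_0 > 0, depending only on d, t and C, such that for every dyadic cube D, liminf_{n→∞} ℳ_∞^t(E_n ∩ D) ≥ C_0 |D|^t. -/

import Mathlib

open MeasureTheory Metric Filter Set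
open scoped ENNReal Topology

noncomputable section

/-- The `d`-dimensional torus `ℝ^d / ℤ^d`. -/
abbrev Torus (d : ℕ) := Fin d → AddCircle (1 : ℝ)

/-- The canonical projection `ℝ^d → 𝕋^d`. -/
def torusProj {d : ℕ} (y : Fin d → ℝ) : Torus d := fun i => (y i : AddCircle (1 : ℝ))

/-- A dyadic cube in the torus: the image under the projection `ℝ^d → 𝕋^d` of a product
of intervals `[kᵢ 2^{-n}, (kᵢ+1) 2^{-n})`. -/
def IsDyadicCube {d : ℕ} (D : Set (Torus d)) : Prop :=
  ∃ (n : ℕ) (k : Fin d → ℤ),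
    D = torusProj ''
      (Set.univ.pi fun i => Set.Ico ((k i : ℝ) / 2 ^ n) (((k i : ℝ) + 1) / 2 ^ n))

/-- The outer dyadic content `ℳ_∞^t(E) = inf { Σ_k |D_k|^t : E ⊆ ⋃_k D_k, D_k dyadic }`. -/
noncomputable def dyadicContent {d : ℕ} (t : ℝ) (E : Set (Torus d)) : ℝ≥0∞ :=
  ⨅ (f : ℕ → Set (Torus d)) (_ : ∀ n, IsDyadicCube (f n)) (_ : E ⊆ ⋃ n, f n),
    ∑' n, EMetric.diam (f n) ^ t

/-- Falconer's class `𝒢^s(𝕋^d)` of sets with large intersections: `G_δ` sets `E` with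
`ℳ_∞^t(E ∩ D) ≥ |D|^t` for all dyadic cubes `D` and all `t < s`. -/
def MemLargeIntersectionClass {d : ℕ} (s : ℝ) (E : Set (Torus d)) : Prop :=
  IsGδ E ∧ ∀ D : Set (Torus d), IsDyadicCube D → ∀ t : ℝ, t < s →
    EMetric.diam D ^ t ≤ dyadicContent t (E ∩ D)

namespace DyadicAux
theorem fact_zero_lt_one_real : Fact ((0:ℝ) < 1) := ⟨one_pos⟩
attribute [local instance] fact_zero_lt_one_real

lemma coe_int (m : ℤ) : ((m : ℝ) : AddCircle (1:ℝ)) = 0 := by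
  rw [QuotientAddGroup.eq_zero_iff]; exact ⟨m, by simp⟩

lemma coe_sub_int (x : ℝ) (m : ℤ) : ((x - m : ℝ) : AddCircle (1:ℝ)) = (x : AddCircle (1:ℝ)) := by
  rw [QuotientAddGroup.mk_sub, coe_int, sub_zero]

lemma coe_add_int (x : ℝ) (m : ℤ) : ((x + m : ℝ) : AddCircle (1:ℝ)) = (x : AddCircle (1:ℝ)) := by
  rw [QuotientAddGroup.mk_add, coe_int, add_zero]

lemma dist_coe_le (x y : ℝ) : dist ((x : AddCircle (1:ℝ))) (y : AddCircle (1:ℝ)) ≤ |x - y| := by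
  rw [dist_eq_norm, ← QuotientAddGroup.mk_sub]
  simpa using QuotientAddGroup.norm_mk_le_norm (S := AddSubgroup.zmultiples (1:ℝ)) (m := x - y)

lemma exists_lift (z : AddCircle (1:ℝ)) (c : ℝ) :
    ∃ y : ℝ, (y : AddCircle (1:ℝ)) = z ∧ |y - c| = dist z ((c : ℝ) : AddCircle (1:ℝ)) := by
  obtain ⟨y₀, rfl⟩ := QuotientAddGroup.mk_surjective z
  refine ⟨y₀ - round (y₀ - c), coe_sub_int _ _, ?_⟩
  have hd : dist ((y₀ : ℝ) : AddCircle (1:ℝ)) ((c:ℝ) : AddCircle (1:ℝ))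
      = ‖((y₀ - c : ℝ) : AddCircle (1:ℝ))‖ := by
    rw [dist_eq_norm, ← QuotientAddGroup.mk_sub]
  rw [hd, AddCircle.norm_eq]
  simp only [inv_one, one_mul, mul_one]
  congr 1; ring

def arc (a b : ℝ) : Set (AddCircle (1:ℝ)) := (fun x : ℝ => (x : AddCircle (1:ℝ))) '' Set.Ico a b

lemma arc_measurable (a b : ℝ) : MeasurableSet (arc a b) := by
  rcases le_or_gt b a with h | h
  · simp [arc, Set.Ico_eq_empty_of_le h]
  · have : arc a b = (fun x : ℝ => (x : AddCircle (1:ℝ))) '' Set.Ioo a b ∪ {((a:ℝ) : AddCircle (1:ℝ))} := by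
      rw [arc, ← Set.Ioo_union_left h, Set.image_union, Set.image_singleton, Set.union_comm]
    rw [this]
    refine MeasurableSet.union ?_ (measurableSet_singleton _)
    exact (QuotientAddGroup.isOpenMap_coe _ isOpen_Ioo).measurableSet

lemma ball_subset_arc {a b c ρ : ℝ} (h1 : a ≤ c - ρ) (h2 : c + ρ ≤ b) :
    Metric.ball ((c : ℝ) : AddCircle (1:ℝ)) ρ ⊆ arc a b := by
  intro z hz
  rw [Metric.mem_ball] at hz
  obtain ⟨y, hy, hyd⟩ := exists_lift z c
  refine ⟨y, ?_, hy⟩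
  have h3 : |y - c| < ρ := hyd ▸ hz
  rw [abs_lt] at h3
  constructor <;> [linarith [h3.1]; linarith [h3.2]]

lemma dist_arc_le {a b x y : ℝ} (hx : x ∈ Set.Ico a b) (hy : y ∈ Set.Ico a b) :
    dist ((x : ℝ) : AddCircle (1:ℝ)) ((y : ℝ) : AddCircle (1:ℝ)) ≤ b - a := by
  refine (dist_coe_le x y).trans ?_
  rw [abs_sub_le_iff]
  constructor <;> [linarith [hx.2, hy.1]; linarith [hy.2, hx.1]]

lemma dist_coe_eq' {c h : ℝ} (hh : 0 ≤ h) (h2 : h ≤ 1/2) :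
    dist ((c : ℝ) : AddCircle (1:ℝ)) (((c + h : ℝ)) : AddCircle (1:ℝ)) = h := by
  rw [dist_eq_norm, ← QuotientAddGroup.mk_sub]
  rw [show c - (c + h) = -h by ring]
  have : ‖((-h : ℝ) : AddCircle (1:ℝ))‖ = |(-h : ℝ)| := by
    rw [AddCircle.norm_coe_eq_abs_iff (p := (1:ℝ)) one_ne_zero]
    rw [abs_neg, abs_of_nonneg hh]; simpa using h2
  rw [this, abs_neg, abs_of_nonneg hh]

/-! ### Cubes -/

variable {d : ℕ}

def cube (d n : ℕ) (k : Fin d → ℤ) : Set (Torus d) :=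
  torusProj '' (Set.univ.pi fun i => Set.Ico ((k i : ℝ) / 2 ^ n) (((k i : ℝ) + 1) / 2 ^ n))

lemma isDyadicCube_cube (n : ℕ) (k : Fin d → ℤ) : IsDyadicCube (cube d n k) := ⟨n, k, rfl⟩

lemma torusProj_image_pi (s : Fin d → Set ℝ) :
    torusProj '' Set.univ.pi s = Set.univ.pi (fun i => (fun x : ℝ => (x : AddCircle (1:ℝ))) '' s i) := by
  ext x
  constructor
  · rintro ⟨y, hy, rfl⟩
    exact fun i _ => ⟨y i, hy i trivial, rfl⟩
  · intro hx
    choose y h1 h2 using fun i => hx i trivial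
    exact ⟨y, fun i _ => h1 i, funext h2⟩

lemma cube_eq_pi (n : ℕ) (k : Fin d → ℤ) :
    cube d n k = Set.univ.pi (fun i => arc ((k i : ℝ) / 2 ^ n) (((k i : ℝ) + 1) / 2 ^ n)) :=
  torusProj_image_pi _

lemma cube_measurable (n : ℕ) (k : Fin d → ℤ) : MeasurableSet (cube d n k) := by
  rw [cube_eq_pi]
  exact MeasurableSet.pi countable_univ (fun i _ => arc_measurable _ _)

lemma Ico_self_mem (n : ℕ) (m : ℤ) :
    (m : ℝ) / 2 ^ n ∈ Set.Ico ((m : ℝ) / 2 ^ n) (((m : ℝ) + 1) / 2 ^ n) := by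
  refine ⟨le_refl _, ?_⟩
  apply div_lt_div_of_pos_right (by linarith) (by positivity)

lemma cube_nonempty (n : ℕ) (k : Fin d → ℤ) : (cube d n k).Nonempty := by
  refine ⟨torusProj (fun i => (k i : ℝ) / 2 ^ n), ?_⟩
  rw [cube_eq_pi]
  exact fun i _ => ⟨(k i : ℝ) / 2 ^ n, Ico_self_mem n (k i), rfl⟩

lemma diam_cube_le (n : ℕ) (k : Fin d → ℤ) :
    EMetric.diam (cube d n k) ≤ ENNReal.ofReal ((2 ^ n : ℝ)⁻¹) := by
  apply EMetric.diam_le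
  intro x hx y hy
  rw [cube_eq_pi] at hx hy
  rw [edist_dist]
  apply ENNReal.ofReal_le_ofReal
  rw [dist_pi_le_iff (by positivity)]
  intro i
  obtain ⟨u, hu, hxu⟩ := hx i trivial
  obtain ⟨v, hv, hyv⟩ := hy i trivial
  rw [← hxu, ← hyv]
  have := dist_arc_le hu hv
  have heq : ((k i : ℝ) + 1) / 2 ^ n - (k i : ℝ) / 2 ^ n = (2 ^ n : ℝ)⁻¹ := by
    field_simp
    ring
  linarith [this, heq.le]

lemma diam_cube_ge (hd : 0 < d) (n : ℕ) (k : Fin d → ℤ) :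
    ENNReal.ofReal ((2 ^ (n+1) : ℝ)⁻¹) ≤ EMetric.diam (cube d n k) := by
  set h : ℝ := (2 ^ (n+1) : ℝ)⁻¹ with hh
  have hh0 : 0 < h := by positivity
  have h2le : (2:ℝ) ≤ 2 ^ (n+1) := by
    calc (2:ℝ) = 2^1 := (pow_one 2).symm
    _ ≤ 2^(n+1) := pow_le_pow_right₀ one_le_two (by omega)
  have hh2 : h ≤ 1/2 := by
    rw [hh, show (1:ℝ)/2 = 2⁻¹ by norm_num]
    exact inv_anti₀ (by norm_num) h2le
  have hlt : h < (2^n : ℝ)⁻¹ := by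
    rw [hh, inv_lt_inv₀ (by positivity) (by positivity)]
    exact pow_lt_pow_right₀ (by norm_num) (by omega)
  set x := torusProj (d := d) (fun i => (k i : ℝ) / 2 ^ n) with hx
  set y := torusProj (d := d) (fun i => (k i : ℝ) / 2 ^ n + h) with hy
  have hxc : x ∈ cube d n k := by
    rw [cube_eq_pi]
    exact fun i _ => ⟨(k i : ℝ) / 2 ^ n, Ico_self_mem n (k i), rfl⟩
  have hyc : y ∈ cube d n k := by
    rw [cube_eq_pi]
    refine fun i _ => ⟨(k i : ℝ) / 2 ^ n + h, ⟨by linarith [hh0], ?_⟩, rfl⟩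
    have heq2 : ((k i : ℝ) + 1) / 2 ^ n = (k i : ℝ) / 2 ^ n + (2^n : ℝ)⁻¹ := by field_simp
    rw [heq2]
    linarith
  calc ENNReal.ofReal h = edist (x ⟨0, hd⟩) (y ⟨0, hd⟩) := by
        rw [edist_dist, hx, hy]
        simp only [torusProj]
        rw [dist_coe_eq' hh0.le hh2]
  _ ≤ edist x y := by
        rw [edist_dist, edist_dist]
        exact ENNReal.ofReal_le_ofReal (dist_le_pi_dist x y _)
  _ ≤ EMetric.diam (cube d n k) := EMetric.edist_le_diam_of_mem hxc hyc

lemma ball_subset_cube (n : ℕ) (k : Fin d → ℤ) :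
    Metric.ball (torusProj (fun i => (k i : ℝ) / 2 ^ n + (2 ^ (n+1) : ℝ)⁻¹)) ((2 ^ (n+2) : ℝ)⁻¹)
      ⊆ cube d n k := by
  intro x hx
  rw [Metric.mem_ball] at hx
  rw [cube_eq_pi]
  intro i _
  have hi : dist (x i) (torusProj (d := d) (fun i => (k i : ℝ) / 2 ^ n + (2 ^ (n+1) : ℝ)⁻¹) i)
      < (2 ^ (n+2) : ℝ)⁻¹ := lt_of_le_of_lt (dist_le_pi_dist _ _ i) hx
  have := ball_subset_arc (c := (k i : ℝ) / 2 ^ n + (2 ^ (n+1) : ℝ)⁻¹)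
      (ρ := (2 ^ (n+2) : ℝ)⁻¹) (a := (k i : ℝ) / 2 ^ n) (b := ((k i : ℝ) + 1) / 2 ^ n)
      (by
        have h1 : (2 ^ (n+2) : ℝ)⁻¹ ≤ (2 ^ (n+1) : ℝ)⁻¹ := by
          exact inv_anti₀ (by positivity) (pow_le_pow_right₀ one_le_two (by omega))
        linarith)
      (by
        have heq : ((k i : ℝ) + 1) / 2 ^ n = (k i : ℝ) / 2 ^ n + (2^n : ℝ)⁻¹ := by field_simp
        rw [heq]
        have e1 : (2 ^ (n+1) : ℝ)⁻¹ + (2 ^ (n+2) : ℝ)⁻¹ ≤ (2^n : ℝ)⁻¹ := by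
          have a1 : (2 ^ (n+1) : ℝ)⁻¹ = (2^n : ℝ)⁻¹ * 2⁻¹ := by
            rw [pow_succ, mul_inv]
          have a2 : (2 ^ (n+2) : ℝ)⁻¹ = (2^n : ℝ)⁻¹ * 2⁻¹ * 2⁻¹ := by
            rw [show n+2 = (n+1)+1 by omega, pow_succ, mul_inv, a1]
          have hpos : (0:ℝ) ≤ (2^n : ℝ)⁻¹ := by positivity
          rw [a1, a2]
          nlinarith [hpos]
        linarith)
  exact this (Metric.mem_ball.mpr hi)


lemma cube_sub (n : ℕ) (k q : Fin d → ℤ) :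
    cube d n (fun i => k i + 2 ^ n * q i) ⊆ cube d n k := by
  rintro x ⟨y, hy, rfl⟩
  refine ⟨fun i => y i - q i, fun i _ => ?_, funext fun i => coe_sub_int (y i) (q i)⟩
  have hyi := hy i trivial
  dsimp only at hyi ⊢
  have hcast : ((k i + 2 ^ n * q i : ℤ) : ℝ) = (k i : ℝ) + 2 ^ n * (q i : ℝ) := by push_cast; ring
  rw [hcast] at hyi
  have h2n : (0:ℝ) < 2 ^ n := by positivity
  have ha : ((k i : ℝ) + 2 ^ n * (q i : ℝ)) / 2 ^ n = (k i : ℝ) / 2 ^ n + q i := by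
    field_simp
  have hb : ((k i : ℝ) + 2 ^ n * (q i : ℝ) + 1) / 2 ^ n = ((k i : ℝ) + 1) / 2 ^ n + q i := by
    field_simp; ring
  rw [ha, hb] at hyi
  exact ⟨by linarith [hyi.1], by linarith [hyi.2]⟩

lemma cube_translate (n : ℕ) (k q : Fin d → ℤ) :
    cube d n (fun i => k i + 2 ^ n * q i) = cube d n k := by
  refine subset_antisymm (cube_sub n k q) ?_
  have := cube_sub n (fun i => k i + 2 ^ n * q i) (fun i => - q i)
  have harg : (fun i => (k i + 2 ^ n * q i) + 2 ^ n * (- q i)) = k := by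
    funext i; ring
  rwa [harg] at this

lemma cube_mod (n : ℕ) (k : Fin d → ℤ) :
    cube d n k = cube d n (fun i => k i % 2 ^ n) := by
  have harg : (fun i => k i % 2 ^ n + 2 ^ n * (k i / 2 ^ n)) = k := by
    funext i
    have := Int.mul_ediv_add_emod (k i) (2 ^ n)
    omega
  conv_lhs => rw [← harg]
  exact cube_translate n (fun i => k i % 2 ^ n) (fun i => k i / 2 ^ n)

lemma finite_cubes (M : ℕ) :
    {Q : Set (Torus d) | ∃ m ≤ M, ∃ k : Fin d → ℤ, Q = cube d m k}.Finite := by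
  have hfin : ((Set.Iic M) ×ˢ (Set.univ.pi fun _ : Fin d => Set.Icc (0:ℤ) (2 ^ M))).Finite :=
    (Set.finite_Iic M).prod (Set.Finite.pi fun _ => Set.finite_Icc _ _)
  apply Set.Finite.subset (hfin.image (fun p : ℕ × (Fin d → ℤ) => cube d p.1 p.2))
  rintro Q ⟨m, hm, k, rfl⟩
  refine ⟨(m, fun i => k i % 2 ^ m), ⟨hm, fun i _ => ?_⟩, (cube_mod m k).symm⟩
  show k i % 2 ^ m ∈ Set.Icc (0:ℤ) (2 ^ M)
  have hpos : (0:ℤ) < 2 ^ m := by positivity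
  refine ⟨Int.emod_nonneg _ (by positivity), ?_⟩
  have h1 : k i % 2 ^ m < 2 ^ m := Int.emod_lt_of_pos _ hpos
  have h2 : (2:ℤ) ^ m ≤ 2 ^ M := pow_le_pow_right₀ (by norm_num) hm
  omega

-- volume of balls in the torus
lemma volume_ball_le (z : Torus d) (ρ : ℝ) :
    volume (Metric.ball z ρ) ≤ ENNReal.ofReal (2 * ρ) ^ d := by
  rcases le_or_gt ρ 0 with h | h
  · rw [Metric.ball_eq_empty.mpr h]
    simp
  · rw [ball_pi _ h, volume_pi_pi]
    calc ∏ i, volume (Metric.ball (z i) ρ) ≤ ∏ _i : Fin d, ENNReal.ofReal (2 * ρ) := by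
          apply Finset.prod_le_prod' 
          intro i _
          calc volume (Metric.ball (z i) ρ) ≤ volume (Metric.closedBall (z i) ρ) :=
                measure_mono Metric.ball_subset_closedBall
          _ = ENNReal.ofReal (min 1 (2 * ρ)) := AddCircle.volume_closedBall _ ρ
          _ ≤ ENNReal.ofReal (2 * ρ) := ENNReal.ofReal_le_ofReal (min_le_right _ _)
    _ = ENNReal.ofReal (2 * ρ) ^ d := by
          rw [Finset.prod_const, Finset.card_univ, Fintype.card_fin]

lemma volume_ball_ge (z : Torus d) {ρ : ℝ} (hρ1 : 0 < ρ) (hρ2 : ρ ≤ 1) :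
    ENNReal.ofReal ρ ^ d ≤ volume (Metric.ball z ρ) := by
  have hsub : Metric.closedBall z (ρ/2) ⊆ Metric.ball z ρ :=
    Metric.closedBall_subset_ball (by linarith)
  refine le_trans ?_ (measure_mono hsub)
  rw [closedBall_pi _ (by linarith), volume_pi_pi]
  have : ∀ i : Fin d, volume (Metric.closedBall (z i) (ρ/2)) = ENNReal.ofReal ρ := by
    intro i
    rw [AddCircle.volume_closedBall _ (ρ/2)]
    congr 1
    rw [min_eq_right]
    · ring
    · linarith
  calc (ENNReal.ofReal ρ) ^ d = ∏ _i : Fin d, ENNReal.ofReal ρ := by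
        rw [Finset.prod_const, Finset.card_univ, Fintype.card_fin]
  _ ≤ ∏ i, volume (Metric.closedBall (z i) (ρ/2)) := by
        apply Finset.prod_le_prod'
        intro i _
        rw [this i]
  _ = _ := rfl



lemma tsum_cauchy_schwarz (a b : ℕ → ℝ≥0∞) :
    ∑' k, a k * b k ≤ (∑' k, a k ^ (2:ℝ)) ^ (1/2:ℝ) * (∑' k, b k ^ (2:ℝ)) ^ (1/2:ℝ) := by
  have hconj : Real.HolderConjugate 2 2 := Real.holderConjugate_iff.mpr ⟨one_lt_two, by norm_num⟩
  have h := ENNReal.lintegral_mul_le_Lp_mul_Lq (Measure.count : Measure ℕ) hconj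
    (Measurable.of_discrete (f := a)).aemeasurable (Measurable.of_discrete (f := b)).aemeasurable
  simpa [lintegral_count] using h

lemma rpow_neg_anti {x y : ℝ≥0∞} (h : x ≤ y) {s : ℝ} (hs : 0 ≤ s) :
    y ^ (-s) ≤ x ^ (-s) := by
  rw [ENNReal.rpow_neg, ENNReal.rpow_neg]
  exact ENNReal.inv_le_inv.mpr (ENNReal.rpow_le_rpow h hs)

lemma tsum_local_energy {X : Type*} [MeasurableSpace X] (μ : Measure X) (K : X → X → ℝ≥0∞)
    (h : ℕ → Set X) (hm : ∀ k, MeasurableSet (h k)) (hd : Pairwise (Function.onFun Disjoint h)) :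
    ∑' k, ∫⁻ x in h k, ∫⁻ y in h k, K x y ∂μ ∂μ ≤ ∫⁻ x, ∫⁻ y, K x y ∂μ ∂μ := by
  calc ∑' k, ∫⁻ x in h k, ∫⁻ y in h k, K x y ∂μ ∂μ
      ≤ ∑' k, ∫⁻ x in h k, ∫⁻ y, K x y ∂μ ∂μ := by
        refine ENNReal.tsum_le_tsum fun k => ?_
        exact lintegral_mono fun x => lintegral_mono' Measure.restrict_le_self le_rfl
    _ = ∫⁻ x in ⋃ k, h k, ∫⁻ y, K x y ∂μ ∂μ := (lintegral_iUnion hm hd _).symm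
    _ ≤ ∫⁻ x, ∫⁻ y, K x y ∂μ ∂μ := lintegral_mono' Measure.restrict_le_self le_rfl

lemma meas_sq_le {X : Type*} [MeasurableSpace X] [PseudoEMetricSpace X] (μ : Measure X)
    {A : Set X} (hA : MeasurableSet A) {ℓ : ℝ≥0∞} (hℓ0 : ℓ ≠ 0) (hℓt : ℓ ≠ ⊤)
    (hdiam : ∀ x ∈ A, ∀ y ∈ A, edist x y ≤ ℓ) {s : ℝ} (hs : 0 ≤ s) :
    μ A * μ A ≤ ℓ ^ s * ∫⁻ x in A, ∫⁻ y in A, edist x y ^ (-s) ∂μ ∂μ := by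
  have hpow0 : (ℓ : ℝ≥0∞) ^ s ≠ 0 := by
    simp [ENNReal.rpow_eq_zero_iff, hℓ0, hℓt]
  have hpowt : (ℓ : ℝ≥0∞) ^ s ≠ ⊤ := ENNReal.rpow_ne_top_of_nonneg hs hℓt
  have inner : ∀ x ∈ A, ℓ ^ (-s) * μ A ≤ ∫⁻ y in A, edist x y ^ (-s) ∂μ := by
    intro x hx
    rw [← setLIntegral_const A (ℓ ^ (-s))]
    refine lintegral_mono_ae ?_
    filter_upwards [(ae_restrict_iff' hA).mpr
      (Filter.Eventually.of_forall fun y (hy : y ∈ A) => rpow_neg_anti (hdiam x hx y hy) hs)]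
      with y hy using hy
  have outer : ℓ ^ (-s) * μ A * μ A ≤ ∫⁻ x in A, ∫⁻ y in A, edist x y ^ (-s) ∂μ ∂μ := by
    rw [show ℓ ^ (-s) * μ A * μ A = (ℓ ^ (-s) * μ A) * μ A by ring]
    rw [← setLIntegral_const A (ℓ ^ (-s) * μ A)]
    refine lintegral_mono_ae ?_
    filter_upwards [(ae_restrict_iff' hA).mpr
      (Filter.Eventually.of_forall fun x (hx : x ∈ A) => inner x hx)] with x hx using hx
  calc μ A * μ A = ℓ ^ s * (ℓ ^ (-s) * μ A * μ A) := by
        rw [show ℓ ^ s * (ℓ ^ (-s) * μ A * μ A) = (ℓ ^ s * ℓ ^ (-s)) * (μ A * μ A) by ring]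
        rw [← ENNReal.rpow_add _ _ hℓ0 hℓt]
        simp
  _ ≤ ℓ ^ s * ∫⁻ x in A, ∫⁻ y in A, edist x y ^ (-s) ∂μ ∂μ := by
        exact mul_le_mul_right outer _

lemma two_cases {a x y : ℝ≥0∞} (h : a ≤ x + y) : a / 2 ≤ x ∨ a / 2 ≤ y := by
  by_contra hc
  push_neg at hc
  have h2 := ENNReal.add_lt_add hc.1 hc.2
  rw [ENNReal.add_halves] at h2
  exact absurd h (not_le.mpr h2)



lemma diam_pos_of_dyadic {d : ℕ} (hd : 0 < d) {Q : Set (Torus d)} (hQ : IsDyadicCube Q) :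
    EMetric.diam Q ≠ 0 := by
  obtain ⟨m, k, rfl⟩ := hQ
  have h := diam_cube_ge hd m k
  have hpos : (0:ℝ≥0∞) < ENNReal.ofReal ((2 ^ (m+1) : ℝ)⁻¹) := ENNReal.ofReal_pos.mpr (by positivity)
  exact (lt_of_lt_of_le hpos h).ne'

lemma diam_ne_top_of_dyadic {d : ℕ} {Q : Set (Torus d)} (hQ : IsDyadicCube Q) :
    EMetric.diam Q ≠ ⊤ := by
  obtain ⟨m, k, rfl⟩ := hQ
  exact ((diam_cube_le m k).trans_lt ENNReal.ofReal_lt_top).ne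

lemma rpow_half_sq (x : ℝ≥0∞) : x ^ (1/2:ℝ) * x ^ (1/2:ℝ) = x := by
  rw [← ENNReal.rpow_add_of_nonneg (x := x) (1/2) (1/2) (by norm_num) (by norm_num)]
  norm_num

lemma content_ge {d : ℕ} (hd : 0 < d) {t s : ℝ} (ht : 0 < t) (hts : t < s) (hsd : s < (d:ℝ))
    {C : ℝ≥0∞} (hC0 : C ≠ 0) (hCt : C ≠ ⊤)
    (μ : Measure (Torus d)) [IsFiniteMeasure μ]
    {E F : Set (Torus d)} (hEnull : μ Eᶜ = 0)
    {r δ A B : ℝ≥0∞}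
    (hr0 : r ≠ 0) (hrt : r ≠ ⊤) (hr1 : r ≤ 1)
    (hδ0 : δ ≠ 0) (hδt : δ ≠ ⊤) (hδr : δ ≤ r) (hδeq : δ ^ (s - t) = r ^ (2 * (d:ℝ) - t))
    (hA0 : A ≠ 0) (hAt : A ≠ ⊤) (hB0 : B ≠ 0) (hBt : B ≠ ⊤)
    (hμD : A * r ^ (d:ℝ) ≤ μ F)
    (hQb : ∀ Q : Set (Torus d), IsDyadicCube Q → δ ≤ EMetric.diam Q →
      μ Q ≤ B * EMetric.diam Q ^ (d:ℝ))
    (henergy : (∫⁻ x, ∫⁻ y, edist x y ^ (-s) ∂μ ∂μ) ≤ C) :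
    min 1 (min (A / (2 * B)) (A * A / (4 * C))) * r ^ t ≤ dyadicContent t (E ∩ F) := by
  set C₀ : ℝ≥0∞ := min 1 (min (A / (2 * B)) (A * A / (4 * C))) with hC₀
  rw [dyadicContent]
  refine le_iInf fun f => le_iInf fun hf => le_iInf fun hcov => ?_
  set ℓ : ℕ → ℝ≥0∞ := fun j => EMetric.diam (f j) with hℓ
  set S : ℝ≥0∞ := ∑' j, ℓ j ^ t with hS
  show C₀ * r ^ t ≤ S
  have hℓ0 : ∀ j, ℓ j ≠ 0 := fun j => diam_pos_of_dyadic hd (hf j)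
  have hℓt : ∀ j, ℓ j ≠ ⊤ := fun j => diam_ne_top_of_dyadic (hf j)
  by_cases hbig : ∃ j, r ≤ ℓ j
  · obtain ⟨j, hj⟩ := hbig
    calc C₀ * r ^ t ≤ 1 * r ^ t := mul_le_mul_left (min_le_left _ _) _
    _ = r ^ t := one_mul _
    _ ≤ ℓ j ^ t := ENNReal.rpow_le_rpow hj ht.le
    _ ≤ S := ENNReal.le_tsum j
  push_neg at hbig
  by_cases hStop : S = ⊤
  · exact hStop ▸ le_top
  -- disjointify
  set g : ℕ → Set (Torus d) := disjointed f with hg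
  have hgm : ∀ j, MeasurableSet (g j) := by
    refine MeasurableSet.disjointed (fun j => ?_)
    obtain ⟨m, k, hk⟩ := hf j
    rw [hk]; exact cube_measurable m k
  have hgd : Pairwise (Function.onFun Disjoint g) := disjoint_disjointed f
  have hgsub : ∀ j, g j ⊆ f j := disjointed_subset f
  -- the main estimate
  set L : ℕ → ℝ≥0∞ := fun j => if δ ≤ ℓ j then μ (f j) else 0 with hL
  set Sm : ℕ → ℝ≥0∞ := fun j => if δ ≤ ℓ j then 0 else μ (g j) with hSm
  have hmain : A * r ^ (d:ℝ) ≤ B * r ^ ((d:ℝ) - t) * S +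
      S ^ (1/2:ℝ) * (δ ^ (s - t) * C) ^ (1/2:ℝ) := by
    have step1 : A * r ^ (d:ℝ) ≤ μ (E ∩ F) := by
      refine hμD.trans ?_
      calc μ F ≤ μ ((E ∩ F) ∪ Eᶜ) := by
            refine measure_mono fun x hx => ?_
            by_cases hxE : x ∈ E
            · exact Or.inl ⟨hxE, hx⟩
            · exact Or.inr hxE
      _ ≤ μ (E ∩ F) + μ Eᶜ := measure_union_le _ _
      _ = μ (E ∩ F) := by rw [hEnull, add_zero]
    have step2 : μ (E ∩ F) ≤ ∑' j, μ (g j) := by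
      calc μ (E ∩ F) ≤ μ (⋃ j, f j) := measure_mono hcov
      _ = μ (⋃ j, g j) := by rw [hg, iUnion_disjointed]
      _ ≤ ∑' j, μ (g j) := measure_iUnion_le _
    have step3 : ∑' j, μ (g j) ≤ (∑' j, L j) + ∑' j, Sm j := by
      rw [← ENNReal.tsum_add]
      refine ENNReal.tsum_le_tsum fun j => ?_
      by_cases hj : δ ≤ ℓ j
      · simp only [hL, hSm, if_pos hj, add_zero]
        exact measure_mono (hgsub j)
      · simp only [hL, hSm, if_neg hj, zero_add, le_refl]
    have stepL : (∑' j, L j) ≤ B * r ^ ((d:ℝ) - t) * S := by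
      rw [hS, ← ENNReal.tsum_mul_left]
      refine ENNReal.tsum_le_tsum fun j => ?_
      by_cases hj : δ ≤ ℓ j
      · simp only [hL, if_pos hj]
        calc μ (f j) ≤ B * ℓ j ^ (d:ℝ) := hQb (f j) (hf j) hj
        _ = B * (ℓ j ^ ((d:ℝ) - t) * ℓ j ^ t) := by
              rw [← ENNReal.rpow_add _ _ (hℓ0 j) (hℓt j)]
              norm_num
        _ ≤ B * (r ^ ((d:ℝ) - t) * ℓ j ^ t) := by
              refine mul_le_mul_right (mul_le_mul_left ?_ _) _
              exact ENNReal.rpow_le_rpow (hbig j).le (by linarith)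
        _ = B * r ^ ((d:ℝ) - t) * (ℓ j ^ t) := by ring
      · simp only [hL, if_neg hj]
        exact zero_le
    have stepY : (∑' j, Sm j) ≤ S ^ (1/2:ℝ) * (δ ^ (s - t) * C) ^ (1/2:ℝ) := by
      have hab : ∀ j, Sm j = (ℓ j ^ (t/2)) * (Sm j * ℓ j ^ (-(t/2))) := by
        intro j
        rw [show (ℓ j ^ (t/2)) * (Sm j * ℓ j ^ (-(t/2)))
            = Sm j * (ℓ j ^ (t/2) * ℓ j ^ (-(t/2))) by ring]
        rw [← ENNReal.rpow_add _ _ (hℓ0 j) (hℓt j)]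
        simp
      calc (∑' j, Sm j) = ∑' j, (ℓ j ^ (t/2)) * (Sm j * ℓ j ^ (-(t/2))) := by
            exact tsum_congr hab
      _ ≤ (∑' j, (ℓ j ^ (t/2)) ^ (2:ℝ)) ^ (1/2:ℝ) *
            (∑' j, (Sm j * ℓ j ^ (-(t/2))) ^ (2:ℝ)) ^ (1/2:ℝ) := tsum_cauchy_schwarz _ _
      _ ≤ S ^ (1/2:ℝ) * (δ ^ (s - t) * C) ^ (1/2:ℝ) := by
            refine mul_le_mul ?_ ?_ zero_le zero_le
            · refine ENNReal.rpow_le_rpow (le_of_eq ?_) (by norm_num)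
              refine tsum_congr fun j => ?_
              rw [← ENNReal.rpow_mul]
              norm_num
            · refine ENNReal.rpow_le_rpow ?_ (by norm_num)
              set e : ℕ → ℝ≥0∞ := fun j => ∫⁻ x in g j, ∫⁻ y in g j, edist x y ^ (-s) ∂μ ∂μ
                with he
              calc (∑' j, (Sm j * ℓ j ^ (-(t/2))) ^ (2:ℝ))
                  ≤ ∑' j, δ ^ (s - t) * e j := by
                    refine ENNReal.tsum_le_tsum fun j => ?_
                    by_cases hj : δ ≤ ℓ j
                    · simp only [hSm, if_pos hj, zero_mul]
                      rw [ENNReal.zero_rpow_of_pos (by norm_num)]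
                      exact zero_le
                    · simp only [hSm, if_neg hj]
                      have h1 : (μ (g j) * ℓ j ^ (-(t/2))) ^ (2:ℝ)
                          = μ (g j) * μ (g j) * ℓ j ^ (-t) := by
                        rw [ENNReal.mul_rpow_of_ne_top (measure_ne_top μ _) ?ht]
                        case ht =>
                          rw [ENNReal.rpow_neg]
                          exact ENNReal.inv_ne_top.mpr (by
                            simp [ENNReal.rpow_eq_zero_iff, hℓ0 j, hℓt j])
                        rw [← ENNReal.rpow_mul]
                        rw [show (2:ℝ) = ((2:ℕ):ℝ) by norm_num, ENNReal.rpow_natCast]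
                        rw [sq]
                        ring_nf
                      rw [h1]
                      have h2 : μ (g j) * μ (g j) ≤ ℓ j ^ s * e j := by
                        refine meas_sq_le μ (hgm j) (hℓ0 j) (hℓt j) ?_ (by linarith)
                        intro x hx y hy
                        exact EMetric.edist_le_diam_of_mem (hgsub j hx) (hgsub j hy)
                      calc μ (g j) * μ (g j) * ℓ j ^ (-t) ≤ ℓ j ^ s * e j * ℓ j ^ (-t) :=
                            mul_le_mul_left h2 _
                      _ = ℓ j ^ (s - t) * e j := by
                            rw [show ℓ j ^ s * e j * ℓ j ^ (-t) = (ℓ j ^ s * ℓ j ^ (-t)) * e j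
                              by ring]
                            rw [← ENNReal.rpow_add _ _ (hℓ0 j) (hℓt j)]
                            ring_nf
                      _ ≤ δ ^ (s - t) * e j := by
                            refine mul_le_mul_left ?_ _
                            exact ENNReal.rpow_le_rpow (le_of_not_ge hj) (by linarith)
              _ = δ ^ (s - t) * ∑' j, e j := ENNReal.tsum_mul_left
              _ ≤ δ ^ (s - t) * C := by
                    refine mul_le_mul_right ?_ _
                    exact (tsum_local_energy μ _ g hgm hgd).trans henergy
    calc A * r ^ (d:ℝ) ≤ μ (E ∩ F) := step1
    _ ≤ ∑' j, μ (g j) := step2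
    _ ≤ (∑' j, L j) + ∑' j, Sm j := step3
    _ ≤ B * r ^ ((d:ℝ) - t) * S + S ^ (1/2:ℝ) * (δ ^ (s - t) * C) ^ (1/2:ℝ) :=
          add_le_add stepL stepY
  -- dichotomy
  have hrpow0 : ∀ u : ℝ, r ^ u ≠ 0 := fun u => by
    simp [ENNReal.rpow_eq_zero_iff, hr0, hrt]
  have hrpowt : ∀ u : ℝ, r ^ u ≠ ⊤ := fun u => by
    simp [ENNReal.rpow_eq_top_iff, hr0, hrt]
  rcases two_cases hmain with hcase | hcase
  · -- large-cubes branch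
    have h1 : (A / 2) * (r ^ ((d:ℝ) - t) * r ^ t) ≤ B * r ^ ((d:ℝ) - t) * S := by
      refine le_trans (le_of_eq ?_) hcase
      rw [← ENNReal.rpow_add _ _ hr0 hrt]
      rw [ENNReal.div_eq_inv_mul, ENNReal.div_eq_inv_mul]
      rw [show (d:ℝ) - t + t = (d:ℝ) by ring]
      ring
    have h2 : (A / 2) * r ^ t ≤ B * S := by
      have h3 : ((A / 2) * r ^ t) * r ^ ((d:ℝ) - t) ≤ (B * S) * r ^ ((d:ℝ) - t) := by
        refine le_trans (le_of_eq (by ring)) (h1.trans (le_of_eq (by ring)))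
      exact (ENNReal.mul_le_mul_iff_left (hrpow0 _) (hrpowt _)).mp h3
    have h4 : A / (2 * B) * r ^ t ≤ S := by
      rw [ENNReal.div_eq_inv_mul, ENNReal.mul_inv (Or.inl (by norm_num)) (Or.inl (by norm_num))]
      rw [show (2:ℝ≥0∞)⁻¹ * B⁻¹ * A * r ^ t = (A / 2 * r ^ t) * B⁻¹ by
        rw [ENNReal.div_eq_inv_mul]; ring]
      rw [← div_eq_mul_inv]
      rw [ENNReal.div_le_iff hB0 hBt]
      exact h2.trans (le_of_eq (mul_comm _ _))
    calc C₀ * r ^ t ≤ (A / (2 * B)) * r ^ t :=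
          mul_le_mul_left ((min_le_right _ _).trans (min_le_left _ _)) _
    _ ≤ S := h4
  · -- small-cubes branch
    have hP : (A / 2) * r ^ (d:ℝ) = A * r ^ (d:ℝ) / 2 := by
      rw [ENNReal.div_eq_inv_mul, ENNReal.div_eq_inv_mul]; ring
    have h1 : ((A / 2) * r ^ (d:ℝ)) * ((A / 2) * r ^ (d:ℝ)) ≤ S * (δ ^ (s - t) * C) := by
      calc ((A / 2) * r ^ (d:ℝ)) * ((A / 2) * r ^ (d:ℝ))
          ≤ (S ^ (1/2:ℝ) * (δ ^ (s - t) * C) ^ (1/2:ℝ)) *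
            (S ^ (1/2:ℝ) * (δ ^ (s - t) * C) ^ (1/2:ℝ)) := by
            rw [hP]; exact mul_le_mul' hcase hcase
      _ = (S ^ (1/2:ℝ) * S ^ (1/2:ℝ)) * ((δ ^ (s - t) * C) ^ (1/2:ℝ) *
            (δ ^ (s - t) * C) ^ (1/2:ℝ)) := by ring
      _ = S * (δ ^ (s - t) * C) := by
            rw [rpow_half_sq, rpow_half_sq]
    rw [hδeq] at h1
    have h2 : ((A/2) * (A/2) * r ^ t) * r ^ (2 * (d:ℝ) - t) ≤ (S * C) * r ^ (2 * (d:ℝ) - t) := by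
      have hr2d : r ^ (2 * (d:ℝ) - t) * r ^ t = r ^ (d:ℝ) * r ^ (d:ℝ) := by
        rw [← ENNReal.rpow_add _ _ hr0 hrt, ← ENNReal.rpow_add _ _ hr0 hrt]
        ring_nf
      refine le_trans (le_of_eq ?_) (h1.trans (le_of_eq ?_))
      · calc A / 2 * (A / 2) * r ^ t * r ^ (2 * (d:ℝ) - t)
            = A / 2 * (A / 2) * (r ^ (2 * (d:ℝ) - t) * r ^ t) := by ring
        _ = A / 2 * (A / 2) * (r ^ (d:ℝ) * r ^ (d:ℝ)) := by rw [hr2d]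
        _ = A / 2 * r ^ (d:ℝ) * (A / 2 * r ^ (d:ℝ)) := by ring
      · ring
    have h3 : (A/2) * (A/2) * r ^ t ≤ S * C :=
      (ENNReal.mul_le_mul_iff_left (hrpow0 _) (hrpowt _)).mp h2
    have h4 : A * A / (4 * C) * r ^ t ≤ S := by
      have hAA : A * A / (4 * C) = (A/2) * (A/2) / C := by
        rw [ENNReal.div_eq_inv_mul, ENNReal.div_eq_inv_mul, ENNReal.div_eq_inv_mul,
          ENNReal.mul_inv (Or.inl (by norm_num)) (Or.inl (by norm_num)),
          show (4:ℝ≥0∞) = 2 * 2 by norm_num,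
          ENNReal.mul_inv (Or.inl (by norm_num)) (Or.inl (by norm_num))]
        ring
      rw [hAA, ENNReal.div_eq_inv_mul,
        show C⁻¹ * (A / 2 * (A / 2)) * r ^ t = (A/2 * (A/2) * r ^ t) * C⁻¹ by ring,
        ← div_eq_mul_inv, ENNReal.div_le_iff hC0 hCt]
      exact h3
    calc C₀ * r ^ t ≤ (A * A / (4 * C)) * r ^ t :=
          mul_le_mul_left ((min_le_right _ _).trans (min_le_right _ _)) _
    _ ≤ S := h4

end DyadicAux

namespace DyadicAux

lemma nonempty_of_dyadic {d : ℕ} {Q : Set (Torus d)} (hQ : IsDyadicCube Q) : Q.Nonempty := by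
  obtain ⟨m, k, rfl⟩ := hQ
  exact cube_nonempty m k

end DyadicAux


open DyadicAux in
/-- **Key estimate in the proof of the Frostman-type lemma.** For `0 < t < s < d`, if the
measures `μ_n` live on the open sets `E_n`, are absolutely continuous with respect to `λ`,
have density ratios on balls asymptotically between `C⁻¹` and `C`, and `s`-energies
bounded by `C`, then there is a constant `C₀ > 0` depending only on `d`, `t` and `C` such
that `liminf_n ℳ_∞^t(E_n ∩ D) ≥ C₀ |D|^t` for every dyadic cube `D`. -/
theorem liminf_dyadicContent_bound
    (d : ℕ) (hd : 0 < d) (t : ℝ) (ht : 0 < t)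
    (C : ℝ≥0∞) (hC0 : 0 < C) (hCtop : C < ⊤) :
    ∃ C₀ : ℝ≥0∞, 0 < C₀ ∧
      ∀ (s : ℝ), t < s → s < d →
      ∀ (E : ℕ → Set (Torus d)), (∀ n, IsOpen (E n)) →
      ∀ (μ : ℕ → Measure (Torus d)), (∀ n, IsFiniteMeasure (μ n)) →
        (∀ n, μ n (E n)ᶜ = 0) →
        (∀ n, μ n ≪ (volume : Measure (Torus d))) →
        (∀ (z : Torus d) (ρ : ℝ), 0 < ρ →
          C⁻¹ ≤ liminf (fun n => μ n (ball z ρ) / volume (ball z ρ)) atTop) →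
        (∀ (z : Torus d) (ρ : ℝ), 0 < ρ →
          limsup (fun n => μ n (ball z ρ) / volume (ball z ρ)) atTop ≤ C) →
        (∀ n, (∫⁻ x, ∫⁻ y, edist x y ^ (-s) ∂(μ n) ∂(μ n)) < C) →
        ∀ D : Set (Torus d), IsDyadicCube D →
          C₀ * EMetric.diam D ^ t ≤
            liminf (fun n => dyadicContent t (E n ∩ D)) atTop := by
  have hC0' : C ≠ 0 := hC0.ne'
  have hCt : C ≠ ⊤ := hCtop.ne
  set four : ℝ≥0∞ := (4:ℝ≥0∞) ^ (d:ℝ) with hfour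
  have h4t : four ≠ ⊤ := ENNReal.rpow_ne_top_of_nonneg (Nat.cast_nonneg d) (by norm_num)
  have h40 : four ≠ 0 := by
    rw [hfour]
    simp [ENNReal.rpow_eq_zero_iff]
  set A : ℝ≥0∞ := 2⁻¹ * C⁻¹ * four⁻¹ with hA
  set B : ℝ≥0∞ := 2 * C * four with hB
  have hA0 : A ≠ 0 := by
    rw [hA]
    refine mul_ne_zero (mul_ne_zero ?_ ?_) ?_
    · exact ENNReal.inv_ne_zero.mpr (by norm_num)
    · exact ENNReal.inv_ne_zero.mpr hCt
    · exact ENNReal.inv_ne_zero.mpr h4t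
  have hAt : A ≠ ⊤ := by
    rw [hA]
    exact ENNReal.mul_ne_top (ENNReal.mul_ne_top (ENNReal.inv_ne_top.mpr (by norm_num))
      (ENNReal.inv_ne_top.mpr hC0')) (ENNReal.inv_ne_top.mpr h40)
  have hB0 : B ≠ 0 := by
    rw [hB]
    exact mul_ne_zero (mul_ne_zero (by norm_num) hC0') h40
  have hBt : B ≠ ⊤ := by
    rw [hB]
    exact ENNReal.mul_ne_top (ENNReal.mul_ne_top (by norm_num) hCt) h4t
  refine ⟨min 1 (min (A / (2 * B)) (A * A / (4 * C))), ?_, ?_⟩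
  · refine lt_min zero_lt_one (lt_min ?_ ?_)
    · exact ENNReal.div_pos hA0 (ENNReal.mul_ne_top (by norm_num) hBt)
    · exact ENNReal.div_pos (mul_ne_zero hA0 hA0) (ENNReal.mul_ne_top (by norm_num) hCt)
  intro s hts hsd E _hEopen μ hfin hnull _hac hlow hup hen D hD
  obtain ⟨n, k, rfl⟩ := hD
  have hDc : (torusProj '' (Set.univ.pi fun i =>
      Set.Ico ((k i : ℝ) / 2 ^ n) (((k i : ℝ) + 1) / 2 ^ n))) = cube d n k := rfl
  rw [hDc]
  set r := EMetric.diam (cube d n k) with hrdef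
  have hrle : r ≤ ENNReal.ofReal ((2^n : ℝ)⁻¹) := diam_cube_le n k
  have hr0 : r ≠ 0 := diam_pos_of_dyadic hd (isDyadicCube_cube n k)
  have hrt : r ≠ ⊤ := diam_ne_top_of_dyadic (isDyadicCube_cube n k)
  have hr1 : r ≤ 1 := by
    refine hrle.trans ?_
    rw [ENNReal.ofReal_le_one]
    rw [inv_le_one_iff₀]
    right
    exact one_le_pow₀ (by norm_num)
  have hst : (0:ℝ) < s - t := by linarith
  have hdpos : (0:ℝ) ≤ (d:ℝ) := Nat.cast_nonneg d
  set α : ℝ := (2*(d:ℝ) - t)/(s - t) with hα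
  have hα1 : 1 ≤ α := by
    rw [hα, le_div_iff₀ hst]
    linarith
  set δ := r ^ α with hδdef
  have hδr : δ ≤ r := ENNReal.rpow_le_self_of_le_one hr1 hα1
  have hδ0 : δ ≠ 0 := by
    rw [hδdef]
    simp [ENNReal.rpow_eq_zero_iff, hr0, hrt]
  have hδt : δ ≠ ⊤ := ENNReal.rpow_ne_top_of_nonneg (by linarith) hrt
  have hδeq : δ ^ (s - t) = r ^ (2*(d:ℝ) - t) := by
    rw [hδdef, ← ENNReal.rpow_mul]
    congr 1
    rw [hα]
    field_simp
  -- the fixed small ball inside the cube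
  set z₀ := torusProj (d := d) (fun i => (k i : ℝ)/2^n + (2^(n+1) : ℝ)⁻¹) with hz₀
  set ρ₀ : ℝ := (2^(n+2) : ℝ)⁻¹ with hρ₀
  have hρ₀pos : 0 < ρ₀ := by rw [hρ₀]; positivity
  have hρ₀le : ρ₀ ≤ 1 := by
    rw [hρ₀, inv_le_one_iff₀]
    right
    exact one_le_pow₀ (by norm_num)
  have hball : Metric.ball z₀ ρ₀ ⊆ cube d n k := ball_subset_cube n k
  set vol := volume (Metric.ball z₀ ρ₀) with hvol
  have hvolge : (ENNReal.ofReal ρ₀) ^ (d:ℝ) ≤ vol := by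
    rw [ENNReal.rpow_natCast]
    exact volume_ball_ge z₀ hρ₀pos hρ₀le
  have hρ₀0' : ENNReal.ofReal ρ₀ ≠ 0 := by
    simp [ENNReal.ofReal_eq_zero, not_le, hρ₀pos]
  have hvol0 : vol ≠ 0 := by
    intro h
    rw [h, le_zero_iff] at hvolge
    have : ENNReal.ofReal ρ₀ ≠ 0 := hρ₀0'
    simp [ENNReal.rpow_eq_zero_iff, hρ₀0', ENNReal.ofReal_ne_top] at hvolge
  have hvolt : vol ≠ ⊤ :=
    ((volume_ball_le z₀ ρ₀).trans_lt (ENNReal.pow_lt_top ENNReal.ofReal_lt_top)).ne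
  have hkey : A * r ^ (d:ℝ) ≤ C⁻¹ / 2 * vol := by
    have hr4 : r ≤ 4 * ENNReal.ofReal ρ₀ := by
      refine hrle.trans (le_of_eq ?_)
      rw [show ((2:ℝ)^n)⁻¹ = 4 * ρ₀ by
        rw [hρ₀, show (2:ℝ)^(n+2) = 2^n * 4 by ring]
        field_simp]
      rw [ENNReal.ofReal_mul (by norm_num)]
      norm_num
    have h1 : r ^ (d:ℝ) ≤ four * (ENNReal.ofReal ρ₀) ^ (d:ℝ) := by
      calc r ^ (d:ℝ) ≤ (4 * ENNReal.ofReal ρ₀) ^ (d:ℝ) :=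
            ENNReal.rpow_le_rpow hr4 (Nat.cast_nonneg d)
      _ = four * (ENNReal.ofReal ρ₀) ^ (d:ℝ) := by
          rw [ENNReal.mul_rpow_of_ne_top (by norm_num) ENNReal.ofReal_ne_top]
    calc A * r ^ (d:ℝ) ≤ A * (four * (ENNReal.ofReal ρ₀) ^ (d:ℝ)) := mul_le_mul_right h1 _
    _ = (C⁻¹ / 2) * ((four⁻¹ * four) * (ENNReal.ofReal ρ₀) ^ (d:ℝ)) := by
        rw [hA, ENNReal.div_eq_inv_mul]
        ring
    _ = (C⁻¹ / 2) * (ENNReal.ofReal ρ₀) ^ (d:ℝ) := by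
        rw [ENNReal.inv_mul_cancel h40 h4t, one_mul]
    _ ≤ C⁻¹ / 2 * vol := mul_le_mul_right hvolge _
  have F1 : ∀ᶠ m in Filter.atTop, A * r ^ (d:ℝ) ≤ μ m (cube d n k) := by
    have hlim := hlow z₀ ρ₀ hρ₀pos
    have hhalf : C⁻¹ / 2 < C⁻¹ :=
      ENNReal.half_lt_self (ENNReal.inv_ne_zero.mpr hCt) (ENNReal.inv_ne_top.mpr hC0')
    filter_upwards [Filter.eventually_lt_of_lt_liminf (lt_of_lt_of_le hhalf hlim)] with m hm
    have h2 : C⁻¹/2 * vol ≤ μ m (Metric.ball z₀ ρ₀) := by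
      have h3 := mul_le_mul_left hm.le vol
      rwa [ENNReal.div_mul_cancel hvol0 hvolt] at h3
    exact hkey.trans (h2.trans (measure_mono hball))
  -- the family of large cubes
  set 𝒬 : Set (Set (Torus d)) := {Q | IsDyadicCube Q ∧ δ ≤ EMetric.diam Q} with h𝒬
  have h𝒬fin : 𝒬.Finite := by
    have hδ' : 0 < δ.toReal := ENNReal.toReal_pos hδ0 hδt
    obtain ⟨M, hM⟩ := exists_pow_lt_of_lt_one hδ' (show (2:ℝ)⁻¹ < 1 by norm_num)
    refine Set.Finite.subset (finite_cubes M) ?_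
    rintro Q ⟨⟨m, k', rfl⟩, hdiam⟩
    refine ⟨m, ?_, k', rfl⟩
    by_contra hmM
    push_neg at hmM
    have h1 : δ.toReal ≤ (2^m : ℝ)⁻¹ := by
      have h2 := ENNReal.toReal_mono ENNReal.ofReal_ne_top (hdiam.trans (diam_cube_le m k'))
      rwa [ENNReal.toReal_ofReal (by positivity)] at h2
    rw [inv_pow] at hM
    have h5 : (2:ℝ)^m < 2^M := by
      have h6 := lt_of_lt_of_le hM h1
      exact (inv_lt_inv₀ (by positivity) (by positivity)).mp h6
    have h7 : m < M := (pow_lt_pow_iff_right₀ (by norm_num : (1:ℝ) < 2)).mp h5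
    omega
  have F2 : ∀ᶠ m in Filter.atTop, ∀ Q ∈ 𝒬, μ m Q ≤ B * EMetric.diam Q ^ (d:ℝ) := by
    rw [Filter.eventually_all_finite h𝒬fin]
    rintro Q ⟨hQ, _hδQ⟩
    have hQ0 : EMetric.diam Q ≠ 0 := diam_pos_of_dyadic hd hQ
    have hQt : EMetric.diam Q ≠ ⊤ := diam_ne_top_of_dyadic hQ
    obtain ⟨zQ, hzQ⟩ := nonempty_of_dyadic hQ
    set ρQ : ℝ := 2 * (EMetric.diam Q).toReal with hρQ
    have htRpos : 0 < (EMetric.diam Q).toReal := ENNReal.toReal_pos hQ0 hQt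
    have hρQpos : 0 < ρQ := by rw [hρQ]; linarith
    have hofQ : ENNReal.ofReal ρQ = 2 * EMetric.diam Q := by
      rw [hρQ, ENNReal.ofReal_mul (by norm_num), ENNReal.ofReal_toReal hQt]
      norm_num
    have hQsub : Q ⊆ Metric.ball zQ ρQ := by
      intro y hy
      have h1 : edist y zQ ≤ EMetric.diam Q := EMetric.edist_le_diam_of_mem hy hzQ
      have h2 : EMetric.diam Q < ENNReal.ofReal ρQ := by
        rw [hofQ, two_mul]
        exact ENNReal.lt_add_right hQt hQ0
      rw [Metric.mem_ball, ← edist_lt_ofReal]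
      exact lt_of_le_of_lt h1 h2
    set volQ := volume (Metric.ball zQ ρQ) with hvolQ
    have hvolQ0 : volQ ≠ 0 := by
      have hsub2 : Metric.ball zQ (min ρQ 1) ⊆ Metric.ball zQ ρQ :=
        Metric.ball_subset_ball (min_le_left _ _)
      have hge := volume_ball_ge zQ (lt_min hρQpos one_pos) (min_le_right _ _)
      intro h
      have h3 := (hge.trans (measure_mono hsub2)).trans_eq h
      rw [le_zero_iff, pow_eq_zero_iff hd.ne', ENNReal.ofReal_eq_zero] at h3
      have := lt_min hρQpos one_pos
      linarith
    have hvolQt : volQ ≠ ⊤ :=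
      ((volume_ball_le zQ ρQ).trans_lt (ENNReal.pow_lt_top ENNReal.ofReal_lt_top)).ne
    have hvolQle : volQ ≤ four * EMetric.diam Q ^ (d:ℝ) := by
      calc volQ ≤ ENNReal.ofReal (2 * ρQ) ^ d := volume_ball_le zQ ρQ
      _ = (4 * EMetric.diam Q) ^ d := by
          rw [ENNReal.ofReal_mul (by norm_num), hofQ]
          rw [show ENNReal.ofReal 2 = 2 by norm_num]
          rw [show (2:ℝ≥0∞) * (2 * EMetric.diam Q) = 4 * EMetric.diam Q by ring]
      _ = four * EMetric.diam Q ^ (d:ℝ) := by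
          rw [mul_pow, hfour, ENNReal.rpow_natCast, ENNReal.rpow_natCast]
    have hCC : C < 2 * C := by
      rw [two_mul]
      exact ENNReal.lt_add_right hCt hC0'
    filter_upwards [Filter.eventually_lt_of_limsup_lt (lt_of_le_of_lt (hup zQ ρQ hρQpos) hCC)]
      with m hm
    have h2 : μ m (Metric.ball zQ ρQ) ≤ 2 * C * volQ := by
      have h3 := mul_le_mul_left hm.le volQ
      rwa [ENNReal.div_mul_cancel hvolQ0 hvolQt] at h3
    calc μ m Q ≤ μ m (Metric.ball zQ ρQ) := measure_mono hQsub
    _ ≤ 2 * C * volQ := h2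
    _ ≤ 2 * C * (four * EMetric.diam Q ^ (d:ℝ)) := mul_le_mul_right hvolQle _
    _ = B * EMetric.diam Q ^ (d:ℝ) := by rw [hB]; ring
  refine Filter.le_liminf_of_le (by isBoundedDefault) ?_
  filter_upwards [F1, F2] with m h1 h2
  haveI := hfin m
  exact content_ge hd ht hts hsd hC0' hCt (μ m) (hnull m) hr0 hrt hr1 hδ0 hδt hδr hδeq
    hA0 hAt hB0 hBt h1 (fun Q hQ hδQ => h2 Q ⟨hQ, hδQ⟩) (hen m).le
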